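/- For every integer $t \ge 2$, setting $r = 2^t - 1$, there exists an $r$-uniform $r$-partite $2^{t-1}$-regular hypergraph with exactly two vertices in each of the $r$ parts that admits no $(t-1)$-shallow hitting edge set. Concretely, the hypergraph with vertex set $\mathbb{F}_2^{t+1} \setminus \{0, x_0\}$ (where $x_0 = (1,0,\dots,0)^T$), with edges $\{x : a^T x = 0, x \ne 0\}$ for those $a \ne 0$ with $a^T x_0 \ne 0$, and with parts $\{x, x + x_0\}$, has these properties. -/

import Mathlib

open Finset
namespace TPS
variable {n : ℕ}
abbrev Vec (n : ℕ) := Fin n → ZMod 2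
lemma z2 : ∀ c : ZMod 2, c = 0 ∨ c = 1 := by decide
lemma addself (v : Vec n) : v + v = 0 := by
  funext i; exact (by decide : ∀ c : ZMod 2, c + c = 0) (v i)
def dot (a x : Vec n) : ZMod 2 := ∑ i, a i * x i
lemma dot_zero_right (a : Vec n) : dot a 0 = 0 := by simp [dot]
lemma dot_comm (a x : Vec n) : dot a x = dot x a := by simp [dot, mul_comm]
lemma dot_add_right (a x y : Vec n) : dot a (x + y) = dot a x + dot a y := by
  simp [dot, mul_add, Finset.sum_add_distrib]
def chi (j : Fin n) : Vec n := fun k => if k = j then 1 else 0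
lemma dot_chi_right (a : Vec n) (j : Fin n) : dot a (chi j) = a j := by
  rw [dot, Finset.sum_eq_single j]
  · simp [chi]
  · intro i _ hij; simp [chi, hij]
  · simp
lemma card_univ_vec : (univ : Finset (Vec n)).card = 2 ^ n := by simp [card_univ]
lemma exists_one {v : Vec n} (hv : v ≠ 0) : ∃ i, v i = 1 := by
  by_contra h
  push_neg at h
  exact hv (funext fun i => (z2 (v i)).resolve_right (h i))

lemma half_eq {X P : ℕ} (h : X + X = P + P) : X = P := by omega

lemma two_pow_split (t : ℕ) (ht : 1 ≤ t) : 2 ^ t = 2 ^ (t - 1) + 2 ^ (t - 1) := by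
  obtain ⟨s, rfl⟩ : ∃ s, t = s + 1 := ⟨t - 1, by omega⟩
  rw [Nat.add_sub_cancel, pow_succ]
  omega

lemma card_shift (p q : Vec n → Prop) [DecidablePred p] [DecidablePred q] (b : Vec n)
    (h : ∀ x, p x ↔ q (x + b)) :
    (univ.filter p).card = (univ.filter q).card := by
  apply Finset.card_bij' (fun x _ => x + b) (fun y _ => y + b)
  · intro x hx
    simp only [mem_filter, mem_univ, true_and] at hx ⊢
    exact (h x).1 hx
  · intro y hy
    simp only [mem_filter, mem_univ, true_and] at hy ⊢
    have := (h (y + b)).2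
    rw [add_assoc, addself, add_zero] at this
    exact this hy
  · intro x _; rw [add_assoc, addself, add_zero]
  · intro y _; rw [add_assoc, addself, add_zero]

lemma count1 (v : Vec n) (hv : v ≠ 0) (c : ZMod 2) :
    (univ.filter fun x => dot v x = c).card = 2 ^ (n - 1) := by
  obtain ⟨i, hi⟩ := exists_one hv
  have hn : 1 ≤ n := i.pos
  have heq : (univ.filter fun x => dot v x = 0).card
      = (univ.filter fun x => dot v x = 1).card := by
    apply card_shift _ _ (chi i)
    intro x
    rw [dot_add_right, dot_chi_right, hi]
    constructor
    · intro h; rw [h]; decide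
    · intro h
      have := z2 (dot v x)
      rcases this with h0 | h1
      · exact h0
      · rw [h1] at h; exact absurd h (by decide)
  have hsum : (univ.filter fun x => dot v x = 0).card
      + (univ.filter fun x => dot v x = 1).card = 2 ^ n := by
    have h1 := Finset.card_filter_add_card_filter_not (s := (univ : Finset (Vec n)))
      (p := fun x => dot v x = 0)
    have h2 : (univ.filter fun x => ¬ dot v x = 0) = (univ.filter fun x => dot v x = 1) := by
      apply Finset.filter_congr
      intro x _
      rcases z2 (dot v x) with h | h <;> simp [h]
    rw [h2] at h1
    rw [h1, card_univ_vec]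
  have hpow : 2 ^ n = 2 ^ (n - 1) + 2 ^ (n - 1) := by
    conv_lhs => rw [show n = n - 1 + 1 by omega, pow_succ]
    ring
  rcases z2 c with rfl | rfl <;> omega

section Main
variable (t : ℕ)

def x0v : Vec (t+1) := fun i => if i = 0 then 1 else 0

lemma x0_ne_zero : x0v t ≠ 0 := by
  intro h
  have := congrFun h 0
  simp [x0v] at this

lemma dot_x0_right (a : Vec (t+1)) : dot a (x0v t) = a 0 := dot_chi_right a 0

lemma dot_x0_left (a : Vec (t+1)) : dot (x0v t) a = a 0 := by
  rw [dot_comm, dot_x0_right]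

lemma exists_good_index {v : Vec (t+1)} (hv0 : v ≠ 0) (hvx : v ≠ x0v t) :
    ∃ i, i ≠ 0 ∧ v i = 1 := by
  by_contra h
  push_neg at h
  have hall : ∀ i, i ≠ 0 → v i = 0 := fun i hi => (z2 (v i)).resolve_right (h i hi)
  rcases z2 (v 0) with h0 | h0
  · refine hv0 (funext fun j => ?_)
    by_cases hc : j = 0
    · simp [hc, h0]
    · simp [hall _ hc]
  · refine hvx (funext fun j => ?_)
    by_cases hc : j = 0
    · simp [x0v, hc, h0]
    · simp [x0v, hc, hall _ hc]

lemma count2 {v : Vec (t+1)} (hv0 : v ≠ 0) (hvx : v ≠ x0v t) :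
    (univ.filter fun a => a 0 = 1 ∧ dot v a = 0).card = 2 ^ (t - 1) := by
  obtain ⟨i, hi0, hi⟩ := exists_good_index t hv0 hvx
  have ht1 : 1 ≤ t := by
    by_contra h
    push_neg at h
    interval_cases t
    exact hi0 (by omega)
  have heq : (univ.filter fun a => a 0 = 1 ∧ dot v a = 0).card
      = (univ.filter fun a => a 0 = 1 ∧ dot v a = 1).card := by
    apply card_shift _ _ (chi i)
    intro a
    have h1 : (a + chi i) 0 = a 0 := by
      have : chi (n := t+1) i 0 = 0 := by simp [chi, Ne.symm hi0]
      simp [this]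
    have h2 : dot v (a + chi i) = dot v a + 1 := by
      rw [dot_add_right, dot_chi_right, hi]
    rw [h1, h2]
    constructor
    · rintro ⟨ha, hd⟩; rw [hd]; exact ⟨ha, by decide⟩
    · rintro ⟨ha, hd⟩
      refine ⟨ha, ?_⟩
      rcases z2 (dot v a) with h | h
      · exact h
      · rw [h] at hd; exact absurd hd (by decide)
  have hsum : (univ.filter fun a => a 0 = 1 ∧ dot v a = 0).card
      + (univ.filter fun a => a 0 = 1 ∧ dot v a = 1).card
      = (univ.filter fun a : Vec (t+1) => a 0 = 1).card := by
    have h1 := Finset.card_filter_add_card_filter_not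
      (s := (univ : Finset (Vec (t+1))).filter fun a => a 0 = 1)
      (p := fun a => dot v a = 0)
    rw [Finset.filter_filter, Finset.filter_filter] at h1
    have h2 : ((univ : Finset (Vec (t+1))).filter fun a => a 0 = 1 ∧ ¬ dot v a = 0)
        = (univ.filter fun a => a 0 = 1 ∧ dot v a = 1) := by
      apply Finset.filter_congr
      intro a _
      rcases z2 (dot v a) with h | h <;> simp [h]
    rw [h2] at h1
    exact h1
  have hT : (univ.filter fun a : Vec (t+1) => a 0 = 1).card = 2 ^ t := by
    have h1 : (univ.filter fun a : Vec (t+1) => a 0 = 1)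
        = (univ.filter fun a => dot (x0v t) a = 1) := by
      apply Finset.filter_congr
      intro a _
      rw [dot_x0_left]
    rw [h1, count1 (x0v t) (x0_ne_zero t) 1]
    simp
  rw [heq] at hsum ⊢
  rw [hT] at hsum
  exact half_eq (hsum.trans (two_pow_split t ht1))

def Fe (a : Vec (t+1)) : Finset (Vec (t+1)) := univ.filter fun x => x ≠ 0 ∧ dot a x = 0

def P : Finset (Vec (t+1)) := univ.filter fun a => a ≠ 0 ∧ dot a (x0v t) ≠ 0

lemma mem_Fe {a x : Vec (t+1)} : x ∈ Fe t a ↔ x ≠ 0 ∧ dot a x = 0 := by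
  simp [Fe]

lemma mem_P {a : Vec (t+1)} : a ∈ P t ↔ a ≠ 0 ∧ dot a (x0v t) ≠ 0 := by
  simp [P]

lemma Fe_inj {a b : Vec (t+1)} (ha : a ≠ 0) (hb : b ≠ 0) (h : Fe t a = Fe t b) : a = b := by
  have key : ∀ x, dot a x = dot b x := by
    intro x
    by_cases hx : x = 0
    · subst hx; rw [dot_zero_right, dot_zero_right]
    · have h1 : x ∈ Fe t a ↔ x ∈ Fe t b := by rw [h]
      rw [mem_Fe, mem_Fe] at h1
      simp only [hx, ne_eq, not_false_eq_true, true_and] at h1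
      rcases z2 (dot a x) with h2 | h2
      · rw [h2, h1.mp h2]
      · rcases z2 (dot b x) with h3 | h3
        · have h4 := h1.mpr h3
          rw [h2] at h4
          exact absurd h4 (by decide)
        · rw [h2, h3]
  funext j
  have hj := key (chi j)
  rw [dot_chi_right, dot_chi_right] at hj
  exact hj

lemma bridge (M : Finset (Finset (Vec (t+1)))) (hM : M ⊆ (P t).image (Fe t))
    {v : Vec (t+1)} (hv : v ≠ 0) :
    (M.filter fun e => v ∈ e).card
      = (((P t).filter fun a => Fe t a ∈ M).filter fun a => dot a v = 0).card := by
  have hset : (M.filter fun e => v ∈ e)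
      = ((((P t).filter fun a => Fe t a ∈ M).filter fun a => dot a v = 0).image (Fe t)) := by
    ext e
    simp only [mem_filter, Finset.mem_image, Finset.filter_filter]
    constructor
    · rintro ⟨heM, hve⟩
      obtain ⟨a, haP, hFa⟩ := Finset.mem_image.mp (hM heM)
      refine ⟨a, ⟨haP, ?_, ?_⟩, hFa⟩
      · rw [hFa]; exact heM
      · rw [← hFa] at hve
        exact (mem_Fe t).mp hve |>.2
    · rintro ⟨a, ⟨haP, haM, hd⟩, rfl⟩
      exact ⟨haM, (mem_Fe t).mpr ⟨hv, hd⟩⟩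
  rw [hset, Finset.card_image_of_injOn]
  intro a ha b hb hab
  have ha0 : a ≠ 0 := ((mem_P t).mp (Finset.mem_of_mem_filter _ (Finset.mem_of_mem_filter _ ha))).1
  have hb0 : b ≠ 0 := ((mem_P t).mp (Finset.mem_of_mem_filter _ (Finset.mem_of_mem_filter _ hb))).1
  exact Fe_inj t ha0 hb0 hab

lemma P_count {v : Vec (t+1)} (hv0 : v ≠ 0) (hvx : v ≠ x0v t) :
    ((P t).filter fun a => dot a v = 0).card = 2 ^ (t - 1) := by
  have hset : ((P t).filter fun a => dot a v = 0)
      = univ.filter fun a => a 0 = 1 ∧ dot v a = 0 := by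
    rw [P, Finset.filter_filter]
    apply Finset.filter_congr
    intro a _
    rw [dot_x0_right, dot_comm]
    constructor
    · rintro ⟨⟨-, h1⟩, h2⟩
      exact ⟨(z2 (a 0)).resolve_left h1, h2⟩
    · rintro ⟨h1, h2⟩
      refine ⟨⟨?_, ?_⟩, h2⟩
      · intro h; rw [h] at h1; simp at h1
      · rw [h1]; decide
  rw [hset]
  exact count2 t hv0 hvx

lemma vec_eq_sum (a : Vec n) : a = ∑ j, a j • chi j := by
  funext k
  rw [Finset.sum_apply]
  rw [Finset.sum_eq_single k]
  · simp [chi]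
  · intro j _ hjk
    simp [chi, Ne.symm hjk]
  · simp

lemma dot_eq_apply (f : Vec n →ₗ[ZMod 2] ZMod 2) (a : Vec n) :
    dot a (fun j => f (chi j)) = f a := by
  conv_rhs => rw [vec_eq_sum a, map_sum]
  rw [dot]
  apply Finset.sum_congr rfl
  intro j _
  rw [map_smul, smul_eq_mul]

lemma nat_absurd {x y t : ℕ} (h2 : 2 ≤ t) (hle : t ≤ x) (hxy : x ≤ y) (hge : y ≤ t - 1) :
    False := by omega

lemma no_shallow (ht : 2 ≤ t) (A : Finset (Vec (t+1)))
    (h0 : ∀ a ∈ A, a 0 = 1)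
    (hlow : ∀ v : Vec (t+1), v ≠ 0 → v ≠ x0v t → 1 ≤ (A.filter fun a => dot a v = 0).card)
    (hhigh : ∀ v : Vec (t+1), v ≠ 0 → v ≠ x0v t → (A.filter fun a => dot a v = 0).card ≤ t - 1) :
    False := by
  -- A is nonempty
  have hone : (⟨1, by omega⟩ : Fin (t+1)) ≠ 0 := by
    intro h
    have := congrArg Fin.val h
    simp at this
  have hAne : ∃ a, a ∈ A := by
    set u : Vec (t+1) := chi ⟨1, by omega⟩ with hu
    have hu0 : u ≠ 0 := by
      intro h
      have := congrFun h ⟨1, by omega⟩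
      simp [hu, chi] at this
    have hux : u ≠ x0v t := by
      intro h
      have := congrFun h 0
      simp [hu, chi, x0v, Ne.symm hone] at this
    have := hlow u hu0 hux
    obtain ⟨a, ha⟩ := Finset.card_pos.mp this
    exact ⟨a, Finset.mem_of_mem_filter _ ha⟩
  -- every nonzero v has some a ∈ A with dot a v = 1
  have hF1 : ∀ v : Vec (t+1), v ≠ 0 → ∃ a ∈ A, dot a v = 1 := by
    intro v hv
    by_cases hvx : v = x0v t
    · obtain ⟨a, ha⟩ := hAne
      refine ⟨a, ha, ?_⟩
      rw [hvx, dot_x0_right, h0 a ha]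
    · have hv1 : v + x0v t ≠ 0 := by
        intro h
        apply hvx
        have := congrArg (· + x0v t) h
        simp only [add_assoc, addself, add_zero, zero_add] at this
        exact this
      have hv2 : v + x0v t ≠ x0v t := by
        intro h
        apply hv
        have := congrArg (· + x0v t) h
        simp only [add_assoc, addself, add_zero] at this
        exact this
      have := hlow _ hv1 hv2
      obtain ⟨a, ha⟩ := Finset.card_pos.mp this
      rw [Finset.mem_filter] at ha
      obtain ⟨haA, hd⟩ := ha
      refine ⟨a, haA, ?_⟩
      rw [dot_add_right, dot_x0_right, h0 a haA] at hd
      rcases z2 (dot a v) with h | h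
      · rw [h] at hd; exact absurd hd (by decide)
      · exact h
  -- A spans
  have hspan : Submodule.span (ZMod 2) (A : Set (Vec (t+1))) = ⊤ := by
    by_contra hn
    obtain ⟨f, hf0, hfmap⟩ := Submodule.exists_dual_map_eq_bot_of_lt_top
      (p := Submodule.span (ZMod 2) (A : Set (Vec (t+1)))) (lt_top_iff_ne_top.mpr hn)
      inferInstance
    set w : Vec (t+1) := fun j => f (chi j) with hw
    have hfw : ∀ a, dot a w = f a := fun a => dot_eq_apply f a
    have hw0 : w ≠ 0 := by
      intro h
      apply hf0
      apply LinearMap.ext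
      intro a
      rw [← hfw a, h, dot_zero_right, LinearMap.zero_apply]
    obtain ⟨a, haA, hd⟩ := hF1 w hw0
    have : f a = 0 := by
      have hmem : f a ∈ (Submodule.span (ZMod 2) (A : Set (Vec (t+1)))).map f :=
        Submodule.mem_map_of_mem (Submodule.subset_span haA)
      rw [hfmap] at hmem
      exact hmem
    rw [hfw] at hd
    rw [this] at hd
    exact absurd hd (by decide)
  -- extract a basis inside A
  obtain ⟨b, hbA, hbspan, hbli⟩ := exists_linearIndependent (ZMod 2) (A : Set (Vec (t+1)))
  rw [hspan] at hbspan
  have hfin : b.Finite := A.finite_toSet.subset hbA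
  haveI : Fintype b := hfin.fintype
  let B : Module.Basis b (ZMod 2) (Vec (t+1)) :=
    Module.Basis.mk hbli (by rw [Subtype.range_coe]; exact hbspan.ge)
  have hcard : Fintype.card b = t + 1 := by
    have h1 := Module.finrank_eq_card_basis B
    rw [Module.finrank_fintype_fun_eq_card, Fintype.card_fin] at h1
    exact h1.symm
  have hbFcard : b.toFinset.card = t + 1 := by
    rw [Set.toFinset_card, hcard]
  -- pick i ∈ b
  obtain ⟨i, hib⟩ : ∃ i, i ∈ b.toFinset := Finset.card_pos.mp (by rw [hbFcard]; omega)
  have hib' : i ∈ b := Set.mem_toFinset.mp hib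
  set iS : b := ⟨i, hib'⟩ with hiS
  set w : Vec (t+1) := fun j => B.coord iS (chi j) with hw
  have hfw : ∀ a, dot a w = B.coord iS a := fun a => dot_eq_apply (B.coord iS) a
  have hcoordB : ∀ jS : b, B.coord iS (B jS) = if jS = iS then 1 else 0 := by
    intro jS
    rw [Module.Basis.coord_apply, Module.Basis.repr_self, Finsupp.single_apply]
  have hBapp : ∀ jS : b, B jS = (jS : Vec (t+1)) := fun jS => Module.Basis.mk_apply hbli _ jS
  have hdotb : ∀ j ∈ b, j ≠ i → dot j w = 0 := by
    intro j hj hji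
    rw [hfw]
    have h1 := hcoordB ⟨j, hj⟩
    rw [hBapp] at h1
    rw [if_neg (fun h => hji (congrArg Subtype.val h))] at h1
    exact h1
  have hdotw_i : dot i w = 1 := by
    rw [hfw]
    have h1 := hcoordB iS
    rw [hBapp, if_pos rfl] at h1
    exact h1
  have hw0 : w ≠ 0 := by
    intro h
    rw [h, dot_zero_right] at hdotw_i
    exact absurd hdotw_i (by decide)
  -- there is j ∈ b, j ≠ i
  obtain ⟨j, hjmem⟩ : ∃ j, j ∈ b.toFinset.erase i := by
    apply Finset.card_pos.mp
    rw [Finset.card_erase_of_mem hib, hbFcard]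
    omega
  obtain ⟨hji, hjb⟩ := Finset.mem_erase.mp hjmem
  have hjb' : j ∈ b := Set.mem_toFinset.mp hjb
  have hwx : w ≠ x0v t := by
    intro h
    have h1 : dot j w = 0 := hdotb j hjb' hji
    rw [h, dot_x0_right, h0 j (hbA hjb')] at h1
    exact absurd h1 (by decide)
  -- the erase set sits inside the filter
  have hsub : b.toFinset.erase i ⊆ A.filter fun a => dot a w = 0 := by
    intro a hamem
    obtain ⟨hai, hab⟩ := Finset.mem_erase.mp hamem
    rw [Finset.mem_filter]
    exact ⟨hbA (Set.mem_toFinset.mp hab), hdotb a (Set.mem_toFinset.mp hab) hai⟩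
  have hle : t ≤ (A.filter fun a => dot a w = 0).card := by
    have h1 := Finset.card_le_card hsub
    rw [Finset.card_erase_of_mem hib, hbFcard] at h1
    exact le_trans (by omega) h1
  exact nat_absurd ht hle (le_refl _) (hhigh w hw0 hwx)

lemma arith1 (t : ℕ) : 2 ^ (t+1) - 2 = 2 * (2 ^ t - 1) := by
  rw [pow_succ]
  have : 1 ≤ 2 ^ t := Nat.one_le_two_pow
  omega

lemma arith2 (t : ℕ) : (2:ℕ) ^ (t + 1 - 1) = 2 ^ t := by
  rw [Nat.add_sub_cancel]

end Main
end TPS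

open TPS in

/-- The truncated projective-space hypergraph: vertices `𝔽₂^{t+1} \ {0, x₀}` with
`x₀ = (1,0,…,0)`, edges `{x ≠ 0 : aᵀx = 0}` for nonzero `a` with `aᵀx₀ ≠ 0`, and parts
`{x, x+x₀}`. It is `(2^t-1)`-uniform, `(2^t-1)`-partite with two vertices per part,
`2^(t-1)`-regular, and admits no `(t-1)`-shallow hitting edge set. -/
theorem truncated_projective_space (t : ℕ) (ht : 2 ≤ t) :
    let x0 : Fin (t+1) → ZMod 2 := fun i => if i = 0 then 1 else 0
    let Vset : Finset (Fin (t+1) → ZMod 2) := Finset.univ.filter fun x => x ≠ 0 ∧ x ≠ x0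
    let E : Finset (Finset (Fin (t+1) → ZMod 2)) :=
      (Finset.univ.filter fun a : Fin (t+1) → ZMod 2 => a ≠ 0 ∧ (∑ i, a i * x0 i) ≠ 0).image
        (fun a => Finset.univ.filter fun x => x ≠ 0 ∧ ∑ i, a i * x i = 0)
    -- there are 2·(2^t - 1) vertices, i.e. r = 2^t - 1 parts of size two
    (Vset.card = 2 * (2^t - 1)) ∧
    -- (2^t - 1)-uniform
    (∀ e ∈ E, e.card = 2^t - 1) ∧
    (∀ e ∈ E, e ⊆ Vset) ∧
    -- the parts {x, x + x0} have two vertices and partition Vset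
    (∀ x ∈ Vset, x + x0 ∈ Vset ∧ x + x0 ≠ x) ∧
    -- partite: each edge meets each part at most once
    (∀ e ∈ E, ∀ x ∈ Vset, (e ∩ {x, x + x0}).card ≤ 1) ∧
    -- 2^(t-1)-regular
    (∀ v ∈ Vset, (E.filter fun e => v ∈ e).card = 2^(t-1)) ∧
    -- no (t-1)-shallow hitting edge set
    ¬ ∃ M ⊆ E, ∀ v ∈ Vset,
        1 ≤ (M.filter fun e => v ∈ e).card ∧ (M.filter fun e => v ∈ e).card ≤ t - 1 := by
  intro x0 Vset E
  have hx0 : x0 = x0v t := rfl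
  have hV : Vset = Finset.univ.filter fun x => x ≠ 0 ∧ x ≠ x0v t := rfl
  have hE : E = (P t).image (Fe t) := rfl
  have hmemV : ∀ v : Vec (t+1), v ∈ Vset ↔ (v ≠ 0 ∧ v ≠ x0v t) := by
    intro v
    rw [hV, Finset.mem_filter]
    simp
  refine ⟨?_, ?_, ?_, ?_, ?_, ?_, ?_⟩
  · -- cardinality of Vset
    have hVs : Vset = Finset.univ \ {0, x0v t} := by
      rw [hV]
      ext x
      simp only [Finset.mem_filter, Finset.mem_sdiff, Finset.mem_univ, true_and,
        Finset.mem_insert, Finset.mem_singleton]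
      tauto
    rw [hVs, Finset.card_sdiff_of_subset (fun y _ => Finset.mem_univ y)]
    rw [card_univ_vec]
    have h2 : ({0, x0v t} : Finset (Vec (t+1))).card = 2 := by
      rw [Finset.card_insert_of_notMem (by simp [Ne.symm (x0_ne_zero t)]),
        Finset.card_singleton]
    rw [h2, arith1]
  · -- uniformity
    intro e he
    rw [hE] at he
    obtain ⟨a, haP, rfl⟩ := Finset.mem_image.mp he
    have ha0 : a ≠ 0 := ((mem_P t).mp haP).1
    have hFe : Fe t a = (Finset.univ.filter fun x => dot a x = 0).erase 0 := by
      ext x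
      rw [mem_Fe, Finset.mem_erase, Finset.mem_filter]
      simp [and_comm]
    rw [hFe, Finset.card_erase_of_mem (by simp [dot_zero_right]),
      count1 a ha0 0, arith2]
  · -- edges inside Vset
    intro e he
    rw [hE] at he
    obtain ⟨a, haP, rfl⟩ := Finset.mem_image.mp he
    intro x hx
    rw [mem_Fe] at hx
    rw [hmemV]
    refine ⟨hx.1, ?_⟩
    intro hxx
    apply ((mem_P t).mp haP).2
    rw [← hxx]
    exact hx.2
  · -- parts
    intro x hxV
    rw [hmemV] at hxV
    obtain ⟨hx0', hxx0⟩ := hxV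
    rw [hx0]
    refine ⟨?_, ?_⟩
    · rw [hmemV]
      constructor
      · intro h
        apply hxx0
        have := congrArg (· + x0v t) h
        simp only [add_assoc, addself, add_zero, zero_add] at this
        exact this
      · intro h
        apply hx0'
        have := congrArg (· + x0v t) h
        simp only [add_assoc, addself, add_zero] at this
        exact this
    · intro h
      apply x0_ne_zero t
      have : x + x0v t = x + 0 := by rw [add_zero]; exact h
      exact add_left_cancel this
  · -- partite
    intro e he x hxV
    rw [hE] at he
    obtain ⟨a, haP, rfl⟩ := Finset.mem_image.mp he
    rw [hx0]
    have key : ¬ (x ∈ Fe t a ∧ x + x0v t ∈ Fe t a) := by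
      rintro ⟨h1, h2⟩
      rw [mem_Fe] at h1 h2
      have h3 := h2.2
      rw [dot_add_right, h1.2, zero_add] at h3
      exact ((mem_P t).mp haP).2 h3
    rw [Finset.card_le_one]
    intro p hp q hq
    rw [Finset.mem_inter] at hp hq
    have hp2 := hp.2
    have hq2 := hq.2
    simp only [Finset.mem_insert, Finset.mem_singleton] at hp2 hq2
    rcases hp2 with rfl | rfl <;> rcases hq2 with rfl | rfl
    · rfl
    · exact absurd ⟨hp.1, hq.1⟩ key
    · exact absurd ⟨hq.1, hp.1⟩ key
    · rfl
  · -- regularity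
    intro v hvV
    rw [hmemV] at hvV
    rw [hE, bridge t _ (Finset.Subset.refl _) hvV.1]
    rw [Finset.filter_true_of_mem (fun a ha => Finset.mem_image_of_mem _ ha)]
    exact P_count t hvV.1 hvV.2
  · -- no shallow hitting set
    rintro ⟨M, hME, hdeg⟩
    rw [hE] at hME
    set A : Finset (Vec (t+1)) := (P t).filter (fun a => Fe t a ∈ M) with hA
    have h0 : ∀ a ∈ A, a 0 = 1 := by
      intro a ha
      have := ((mem_P t).mp (Finset.mem_of_mem_filter _ ha)).2
      rw [dot_x0_right] at this
      exact (z2 (a 0)).resolve_left this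
    have hcardeq : ∀ v : Vec (t+1), v ≠ 0 →
        (M.filter fun e => v ∈ e).card = (A.filter fun a => dot a v = 0).card :=
      fun v hv => bridge t M hME hv
    apply no_shallow t ht A h0
    · intro v hv1 hv2
      have := (hdeg v ((hmemV v).mpr ⟨hv1, hv2⟩)).1
      rwa [hcardeq v hv1] at this
    · intro v hv1 hv2
      have := (hdeg v ((hmemV v).mpr ⟨hv1, hv2⟩)).2
      rwa [hcardeq v hv1] at this
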